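/- Let Ω = cω + c₁ξ₁ + c₂ξ₂ + c₃ξ₃ + aθ as above. The linear map X ↦ Ω∧X from span{α₁∧β₁, α₁∧β₂, α₂∧β₁, α₂∧β₂, γ∧η} to the space of 4-forms is injective if and only if (c - c₂ - c₃)(c² - c₁² + a² + cc₂ + cc₃ + c₂c₃) ≠ 0. -/

import Mathlib

open ExteriorAlgebra

/-- The basis 1-forms α₁, β₁, α₂, β₂, γ, η of the exterior algebra over ℝ⁶. -/
noncomputable def e (i : Fin 6) : ExteriorAlgebra ℝ (Fin 6 → ℝ) :=
  ExteriorAlgebra.ι ℝ (Pi.single i 1)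

noncomputable def α₁ := e 0
noncomputable def β₁ := e 1
noncomputable def α₂ := e 2
noncomputable def β₂ := e 3
noncomputable def γ' := e 4
noncomputable def η' := e 5

/-- ω = α₁∧β₁ + α₂∧β₂ + γ∧η -/
noncomputable def ω : ExteriorAlgebra ℝ (Fin 6 → ℝ) := α₁ * β₁ + α₂ * β₂ + γ' * η'
/-- ξ₁ = α₁∧β₂ + α₂∧β₁ -/
noncomputable def ξ₁ : ExteriorAlgebra ℝ (Fin 6 → ℝ) := α₁ * β₂ + α₂ * β₁
/-- ξ₂ = α₁∧β₁ - γ∧η -/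
noncomputable def ξ₂ : ExteriorAlgebra ℝ (Fin 6 → ℝ) := α₁ * β₁ - γ' * η'
/-- ξ₃ = α₂∧β₂ - γ∧η -/
noncomputable def ξ₃ : ExteriorAlgebra ℝ (Fin 6 → ℝ) := α₂ * β₂ - γ' * η'
/-- θ = α₁∧β₂ - α₂∧β₁ -/
noncomputable def θ : ExteriorAlgebra ℝ (Fin 6 → ℝ) := α₁ * β₂ - α₂ * β₁

/-- Ω = cω + c₁ξ₁ + c₂ξ₂ + c₃ξ₃ + aθ -/
noncomputable def Ω (c c₁ c₂ c₃ a : ℝ) : ExteriorAlgebra ℝ (Fin 6 → ℝ) :=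
  c • ω + c₁ • ξ₁ + c₂ • ξ₂ + c₃ • ξ₃ + a • θ


-- ------------------------------------------------------------------
-- Auxiliary machinery
-- ------------------------------------------------------------------

private lemma esq' (i : Fin 6) : e i * e i = 0 := ι_sq_zero _

private lemma eswap' (i j : Fin 6) : e i * e j = -(e j * e i) :=
  eq_neg_of_add_eq_zero_left (ι_add_mul_swap _ _)

private lemma Lmid (a b c d : Fin 6) :
    (e a * e b) * (e c * e d) = -((e a * e c) * (e b * e d)) := by
  rw [mul_assoc, mul_assoc, ← mul_assoc (e b), eswap' b c, neg_mul, mul_neg, mul_assoc]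

private lemma Llast (a b c d : Fin 6) :
    (e a * e b) * (e c * e d) = -((e a * e b) * (e d * e c)) := by
  rw [eswap' c d, mul_neg]

private lemma Lfirst (a b c d : Fin 6) :
    (e a * e b) * (e c * e d) = -((e b * e a) * (e c * e d)) := by
  rw [eswap' a b, neg_mul]

private lemma L2 (a b d : Fin 6) : (e a * e b) * (e a * e d) = 0 := by
  rw [Lmid, esq', zero_mul, neg_zero]

private lemma L3 (a b c : Fin 6) : (e a * e b) * (e c * e b) = 0 := by
  rw [Lmid, esq', mul_zero, neg_zero]

private lemma Lcomm (a b c d : Fin 6) :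
    (e a * e b) * (e c * e d) = (e c * e d) * (e a * e b) := by
  rw [Lmid, Lfirst, Lmid, Llast, Lmid, eswap' b a]; simp

private lemma m23 : (e 0 * e 3) * (e 2 * e 1) = -((e 0 * e 1) * (e 2 * e 3)) := by
  rw [Lmid 0 3 2 1, Llast 0 2 3 1, Lmid 0 2 1 3]; simp

private lemma m32 : (e 2 * e 1) * (e 0 * e 3) = -((e 0 * e 1) * (e 2 * e 3)) := by
  rw [Lcomm, m23]

/-- The key multiplication formula for two elements of the span of the basic 2-forms. -/
private lemma key (p q r s t x1 x2 x3 x4 x5 : ℝ) :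
    (p • (e 0 * e 1) + (q • (e 0 * e 3) + (r • (e 2 * e 1) + (s • (e 2 * e 3) +
        t • (e 4 * e 5))))) *
      (x1 • (e 0 * e 1) + (x2 • (e 0 * e 3) + (x3 • (e 2 * e 1) + (x4 • (e 2 * e 3) +
        x5 • (e 4 * e 5)))))
    = (p*x4 + s*x1 - q*x3 - r*x2) • ((e 0 * e 1) * (e 2 * e 3))
      + (p*x5 + t*x1) • ((e 0 * e 1) * (e 4 * e 5))
      + (q*x5 + t*x2) • ((e 0 * e 3) * (e 4 * e 5))
      + (r*x5 + t*x3) • ((e 2 * e 1) * (e 4 * e 5))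
      + (s*x5 + t*x4) • ((e 2 * e 3) * (e 4 * e 5)) := by
  simp only [mul_add, add_mul, smul_mul_assoc, mul_smul_comm,
    L2 0 1 1, L2 0 1 3, L3 0 1 2, L2 0 3 1, L2 0 3 3, L3 0 3 2,
    L3 2 1 0, L2 2 1 1, L2 2 1 3, L3 2 3 0, L2 2 3 1, L2 2 3 3,
    L2 4 5 5, m23, m32,
    Lcomm 2 3 0 1, Lcomm 4 5 0 1, Lcomm 4 5 0 3, Lcomm 4 5 2 1, Lcomm 4 5 2 3,
    smul_zero, smul_neg, add_zero, zero_add]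
  module

private lemma Ω_eq (c c₁ c₂ c₃ a : ℝ) :
    Ω c c₁ c₂ c₃ a
    = (c + c₂) • (e 0 * e 1) + ((c₁ + a) • (e 0 * e 3) + ((c₁ - a) • (e 2 * e 1) +
        ((c + c₃) • (e 2 * e 3) + (c - c₂ - c₃) • (e 4 * e 5)))) := by
  simp only [Ω, ω, ξ₁, ξ₂, ξ₃, θ, α₁, β₁, α₂, β₂, γ', η']
  module

-- ------------------------------------------------------------------
-- Coefficient-extracting functionals via `liftAlternating`
-- ------------------------------------------------------------------

private noncomputable def φ4 (σ : Fin 4 → Fin 6) : (Fin 6 → ℝ) [⋀^Fin 4]→ₗ[ℝ] ℝ :=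
  (Matrix.detRowAlternating (R := ℝ) (n := Fin 4)).compLinearMap (LinearMap.funLeft ℝ ℝ σ)

private noncomputable def fam4 (σ : Fin 4 → Fin 6) : ∀ n, (Fin 6 → ℝ) [⋀^Fin n]→ₗ[ℝ] ℝ :=
  fun n => if h : n = 4 then h ▸ φ4 σ else 0

private noncomputable def F (σ : Fin 4 → Fin 6) : ExteriorAlgebra ℝ (Fin 6 → ℝ) →ₗ[ℝ] ℝ :=
  liftAlternating (fam4 σ)

private lemma F_apply (σ : Fin 4 → Fin 6) (i j k l : Fin 6) :
    F σ ((e i * e j) * (e k * e l)) =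
      Matrix.det (Matrix.of fun (x y : Fin 4) =>
        (Pi.single (![i,j,k,l] x) 1 : Fin 6 → ℝ) (σ y)) := by
  have h : (e i * e j) * (e k * e l)
      = ιMulti ℝ 4 ![Pi.single i 1, Pi.single j 1, Pi.single k 1, Pi.single l 1] := by
    rw [ιMulti_apply]
    norm_num [List.ofFn_succ, Matrix.cons_val_zero, Matrix.cons_val_one, Matrix.head_cons,
      Matrix.cons_val_succ, e, mul_assoc]
  rw [h, F, liftAlternating_apply_ιMulti]
  have h2 : fam4 σ 4 = φ4 σ := by simp [fam4]
  rw [h2]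
  simp only [φ4, AlternatingMap.compLinearMap_apply, Matrix.detRowAlternating]
  congr 1
  funext x y
  fin_cases x <;> rfl

private noncomputable def φ2 (σ : Fin 2 → Fin 6) : (Fin 6 → ℝ) [⋀^Fin 2]→ₗ[ℝ] ℝ :=
  (Matrix.detRowAlternating (R := ℝ) (n := Fin 2)).compLinearMap (LinearMap.funLeft ℝ ℝ σ)

private noncomputable def fam2 (σ : Fin 2 → Fin 6) : ∀ n, (Fin 6 → ℝ) [⋀^Fin n]→ₗ[ℝ] ℝ :=
  fun n => if h : n = 2 then h ▸ φ2 σ else 0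

private noncomputable def G (σ : Fin 2 → Fin 6) : ExteriorAlgebra ℝ (Fin 6 → ℝ) →ₗ[ℝ] ℝ :=
  liftAlternating (fam2 σ)

private lemma G_apply (σ : Fin 2 → Fin 6) (i j : Fin 6) :
    G σ (e i * e j) =
      Matrix.det (Matrix.of fun (x y : Fin 2) =>
        (Pi.single (![i,j] x) 1 : Fin 6 → ℝ) (σ y)) := by
  have h : e i * e j = ιMulti ℝ 2 ![Pi.single i 1, Pi.single j 1] := by
    rw [ιMulti_apply]
    norm_num [List.ofFn_succ, Matrix.cons_val_zero, Matrix.cons_val_one, Matrix.head_cons,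
      Matrix.cons_val_succ, e]
  rw [h, G, liftAlternating_apply_ιMulti]
  have h2 : fam2 σ 2 = φ2 σ := by simp [fam2]
  rw [h2]
  simp only [φ2, AlternatingMap.compLinearMap_apply, Matrix.detRowAlternating]
  congr 1
  funext x y
  fin_cases x <;> rfl

private lemma fe00 : F ![0,1,2,3] ((e 0 * e 1) * (e 2 * e 3)) = 1 := by
  rw [F_apply]
  simp [Matrix.det_succ_row_zero, Fin.sum_univ_succ, Pi.single_apply]

private lemma fe01 : F ![0,1,2,3] ((e 0 * e 1) * (e 4 * e 5)) = 0 := by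
  rw [F_apply]
  simp [Matrix.det_succ_row_zero, Fin.sum_univ_succ, Pi.single_apply]

private lemma fe02 : F ![0,1,2,3] ((e 0 * e 3) * (e 4 * e 5)) = 0 := by
  rw [F_apply]
  simp [Matrix.det_succ_row_zero, Fin.sum_univ_succ, Pi.single_apply]

private lemma fe03 : F ![0,1,2,3] ((e 2 * e 1) * (e 4 * e 5)) = 0 := by
  rw [F_apply]
  simp [Matrix.det_succ_row_zero, Fin.sum_univ_succ, Pi.single_apply]

private lemma fe04 : F ![0,1,2,3] ((e 2 * e 3) * (e 4 * e 5)) = 0 := by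
  rw [F_apply]
  simp [Matrix.det_succ_row_zero, Fin.sum_univ_succ, Pi.single_apply]

private lemma fe10 : F ![0,1,4,5] ((e 0 * e 1) * (e 2 * e 3)) = 0 := by
  rw [F_apply]
  simp [Matrix.det_succ_row_zero, Fin.sum_univ_succ, Pi.single_apply]

private lemma fe11 : F ![0,1,4,5] ((e 0 * e 1) * (e 4 * e 5)) = 1 := by
  rw [F_apply]
  simp [Matrix.det_succ_row_zero, Fin.sum_univ_succ, Pi.single_apply]

private lemma fe12 : F ![0,1,4,5] ((e 0 * e 3) * (e 4 * e 5)) = 0 := by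
  rw [F_apply]
  simp [Matrix.det_succ_row_zero, Fin.sum_univ_succ, Pi.single_apply]

private lemma fe13 : F ![0,1,4,5] ((e 2 * e 1) * (e 4 * e 5)) = 0 := by
  rw [F_apply]
  simp [Matrix.det_succ_row_zero, Fin.sum_univ_succ, Pi.single_apply]

private lemma fe14 : F ![0,1,4,5] ((e 2 * e 3) * (e 4 * e 5)) = 0 := by
  rw [F_apply]
  simp [Matrix.det_succ_row_zero, Fin.sum_univ_succ, Pi.single_apply]

private lemma fe20 : F ![0,3,4,5] ((e 0 * e 1) * (e 2 * e 3)) = 0 := by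
  rw [F_apply]
  simp [Matrix.det_succ_row_zero, Fin.sum_univ_succ, Pi.single_apply]

private lemma fe21 : F ![0,3,4,5] ((e 0 * e 1) * (e 4 * e 5)) = 0 := by
  rw [F_apply]
  simp [Matrix.det_succ_row_zero, Fin.sum_univ_succ, Pi.single_apply]

private lemma fe22 : F ![0,3,4,5] ((e 0 * e 3) * (e 4 * e 5)) = 1 := by
  rw [F_apply]
  simp [Matrix.det_succ_row_zero, Fin.sum_univ_succ, Pi.single_apply]

private lemma fe23 : F ![0,3,4,5] ((e 2 * e 1) * (e 4 * e 5)) = 0 := by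
  rw [F_apply]
  simp [Matrix.det_succ_row_zero, Fin.sum_univ_succ, Pi.single_apply]

private lemma fe24 : F ![0,3,4,5] ((e 2 * e 3) * (e 4 * e 5)) = 0 := by
  rw [F_apply]
  simp [Matrix.det_succ_row_zero, Fin.sum_univ_succ, Pi.single_apply]

private lemma fe30 : F ![2,1,4,5] ((e 0 * e 1) * (e 2 * e 3)) = 0 := by
  rw [F_apply]
  simp [Matrix.det_succ_row_zero, Fin.sum_univ_succ, Pi.single_apply]

private lemma fe31 : F ![2,1,4,5] ((e 0 * e 1) * (e 4 * e 5)) = 0 := by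
  rw [F_apply]
  simp [Matrix.det_succ_row_zero, Fin.sum_univ_succ, Pi.single_apply]

private lemma fe32 : F ![2,1,4,5] ((e 0 * e 3) * (e 4 * e 5)) = 0 := by
  rw [F_apply]
  simp [Matrix.det_succ_row_zero, Fin.sum_univ_succ, Pi.single_apply]

private lemma fe33 : F ![2,1,4,5] ((e 2 * e 1) * (e 4 * e 5)) = 1 := by
  rw [F_apply]
  simp [Matrix.det_succ_row_zero, Fin.sum_univ_succ, Pi.single_apply]

private lemma fe34 : F ![2,1,4,5] ((e 2 * e 3) * (e 4 * e 5)) = 0 := by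
  rw [F_apply]
  simp [Matrix.det_succ_row_zero, Fin.sum_univ_succ, Pi.single_apply]

private lemma fe40 : F ![2,3,4,5] ((e 0 * e 1) * (e 2 * e 3)) = 0 := by
  rw [F_apply]
  simp [Matrix.det_succ_row_zero, Fin.sum_univ_succ, Pi.single_apply]

private lemma fe41 : F ![2,3,4,5] ((e 0 * e 1) * (e 4 * e 5)) = 0 := by
  rw [F_apply]
  simp [Matrix.det_succ_row_zero, Fin.sum_univ_succ, Pi.single_apply]

private lemma fe42 : F ![2,3,4,5] ((e 0 * e 3) * (e 4 * e 5)) = 0 := by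
  rw [F_apply]
  simp [Matrix.det_succ_row_zero, Fin.sum_univ_succ, Pi.single_apply]

private lemma fe43 : F ![2,3,4,5] ((e 2 * e 1) * (e 4 * e 5)) = 0 := by
  rw [F_apply]
  simp [Matrix.det_succ_row_zero, Fin.sum_univ_succ, Pi.single_apply]

private lemma fe44 : F ![2,3,4,5] ((e 2 * e 3) * (e 4 * e 5)) = 1 := by
  rw [F_apply]
  simp [Matrix.det_succ_row_zero, Fin.sum_univ_succ, Pi.single_apply]

private lemma ge00 : G ![0,1] (e 0 * e 1) = 1 := by
  rw [G_apply]
  simp (config := { decide := true }) [Matrix.det_fin_two, Pi.single_apply, Fin.ext_iff]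

private lemma ge01 : G ![0,1] (e 0 * e 3) = 0 := by
  rw [G_apply]
  simp (config := { decide := true }) [Matrix.det_fin_two, Pi.single_apply, Fin.ext_iff]

private lemma ge02 : G ![0,1] (e 2 * e 1) = 0 := by
  rw [G_apply]
  simp (config := { decide := true }) [Matrix.det_fin_two, Pi.single_apply, Fin.ext_iff]

private lemma ge03 : G ![0,1] (e 2 * e 3) = 0 := by
  rw [G_apply]
  simp (config := { decide := true }) [Matrix.det_fin_two, Pi.single_apply, Fin.ext_iff]

private lemma ge04 : G ![0,1] (e 4 * e 5) = 0 := by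
  rw [G_apply]
  simp (config := { decide := true }) [Matrix.det_fin_two, Pi.single_apply, Fin.ext_iff]

private lemma ge10 : G ![0,3] (e 0 * e 1) = 0 := by
  rw [G_apply]
  simp (config := { decide := true }) [Matrix.det_fin_two, Pi.single_apply, Fin.ext_iff]

private lemma ge11 : G ![0,3] (e 0 * e 3) = 1 := by
  rw [G_apply]
  simp (config := { decide := true }) [Matrix.det_fin_two, Pi.single_apply, Fin.ext_iff]

private lemma ge12 : G ![0,3] (e 2 * e 1) = 0 := by
  rw [G_apply]
  simp (config := { decide := true }) [Matrix.det_fin_two, Pi.single_apply, Fin.ext_iff]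

private lemma ge13 : G ![0,3] (e 2 * e 3) = 0 := by
  rw [G_apply]
  simp (config := { decide := true }) [Matrix.det_fin_two, Pi.single_apply, Fin.ext_iff]

private lemma ge14 : G ![0,3] (e 4 * e 5) = 0 := by
  rw [G_apply]
  simp (config := { decide := true }) [Matrix.det_fin_two, Pi.single_apply, Fin.ext_iff]

private lemma ge20 : G ![2,1] (e 0 * e 1) = 0 := by
  rw [G_apply]
  simp (config := { decide := true }) [Matrix.det_fin_two, Pi.single_apply, Fin.ext_iff]

private lemma ge21 : G ![2,1] (e 0 * e 3) = 0 := by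
  rw [G_apply]
  simp (config := { decide := true }) [Matrix.det_fin_two, Pi.single_apply, Fin.ext_iff]

private lemma ge22 : G ![2,1] (e 2 * e 1) = 1 := by
  rw [G_apply]
  simp (config := { decide := true }) [Matrix.det_fin_two, Pi.single_apply, Fin.ext_iff]

private lemma ge23 : G ![2,1] (e 2 * e 3) = 0 := by
  rw [G_apply]
  simp (config := { decide := true }) [Matrix.det_fin_two, Pi.single_apply, Fin.ext_iff]

private lemma ge24 : G ![2,1] (e 4 * e 5) = 0 := by
  rw [G_apply]
  simp (config := { decide := true }) [Matrix.det_fin_two, Pi.single_apply, Fin.ext_iff]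

private lemma ge30 : G ![2,3] (e 0 * e 1) = 0 := by
  rw [G_apply]
  simp (config := { decide := true }) [Matrix.det_fin_two, Pi.single_apply, Fin.ext_iff]

private lemma ge31 : G ![2,3] (e 0 * e 3) = 0 := by
  rw [G_apply]
  simp (config := { decide := true }) [Matrix.det_fin_two, Pi.single_apply, Fin.ext_iff]

private lemma ge32 : G ![2,3] (e 2 * e 1) = 0 := by
  rw [G_apply]
  simp (config := { decide := true }) [Matrix.det_fin_two, Pi.single_apply, Fin.ext_iff]

private lemma ge33 : G ![2,3] (e 2 * e 3) = 1 := by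
  rw [G_apply]
  simp (config := { decide := true }) [Matrix.det_fin_two, Pi.single_apply, Fin.ext_iff]

private lemma ge34 : G ![2,3] (e 4 * e 5) = 0 := by
  rw [G_apply]
  simp (config := { decide := true }) [Matrix.det_fin_two, Pi.single_apply, Fin.ext_iff]

private lemma ge40 : G ![4,5] (e 0 * e 1) = 0 := by
  rw [G_apply]
  simp (config := { decide := true }) [Matrix.det_fin_two, Pi.single_apply, Fin.ext_iff]

private lemma ge41 : G ![4,5] (e 0 * e 3) = 0 := by
  rw [G_apply]
  simp (config := { decide := true }) [Matrix.det_fin_two, Pi.single_apply, Fin.ext_iff]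

private lemma ge42 : G ![4,5] (e 2 * e 1) = 0 := by
  rw [G_apply]
  simp (config := { decide := true }) [Matrix.det_fin_two, Pi.single_apply, Fin.ext_iff]

private lemma ge43 : G ![4,5] (e 2 * e 3) = 0 := by
  rw [G_apply]
  simp (config := { decide := true }) [Matrix.det_fin_two, Pi.single_apply, Fin.ext_iff]

private lemma ge44 : G ![4,5] (e 4 * e 5) = 1 := by
  rw [G_apply]
  simp (config := { decide := true }) [Matrix.det_fin_two, Pi.single_apply, Fin.ext_iff]
private abbrev EA := ExteriorAlgebra ℝ (Fin 6 → ℝ)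

private abbrev S : Set EA := {α₁ * β₁, α₁ * β₂, α₂ * β₁, α₂ * β₂, γ' * η'}

private lemma hset (w : EA) (hw : w ∈ Submodule.span ℝ S) :
    ∃ x1 x2 x3 x4 x5 : ℝ,
      w = x1 • (e 0 * e 1) + (x2 • (e 0 * e 3) + (x3 • (e 2 * e 1) +
        (x4 • (e 2 * e 3) + x5 • (e 4 * e 5)))) := by
  rw [Submodule.mem_span_insert] at hw; obtain ⟨x1, w1, hw1, rfl⟩ := hw
  rw [Submodule.mem_span_insert] at hw1; obtain ⟨x2, w2, hw2, rfl⟩ := hw1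
  rw [Submodule.mem_span_insert] at hw2; obtain ⟨x3, w3, hw3, rfl⟩ := hw2
  rw [Submodule.mem_span_insert] at hw3; obtain ⟨x4, w4, hw4, rfl⟩ := hw3
  rw [Submodule.mem_span_singleton] at hw4; obtain ⟨x5, rfl⟩ := hw4
  exact ⟨x1, x2, x3, x4, x5, rfl⟩

private lemma hmem (x1 x2 x3 x4 x5 : ℝ) :
    (x1 • (e 0 * e 1) + (x2 • (e 0 * e 3) + (x3 • (e 2 * e 1) +
      (x4 • (e 2 * e 3) + x5 • (e 4 * e 5))))) ∈ Submodule.span ℝ S := by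
  have h1 : (α₁ * β₁) ∈ S := Set.mem_insert _ _
  have h2 : (α₁ * β₂) ∈ S := Set.mem_insert_of_mem _ (Set.mem_insert _ _)
  have h3 : (α₂ * β₁) ∈ S :=
    Set.mem_insert_of_mem _ (Set.mem_insert_of_mem _ (Set.mem_insert _ _))
  have h4 : (α₂ * β₂) ∈ S :=
    Set.mem_insert_of_mem _ (Set.mem_insert_of_mem _ (Set.mem_insert_of_mem _
      (Set.mem_insert _ _)))
  have h5 : (γ' * η') ∈ S :=
    Set.mem_insert_of_mem _ (Set.mem_insert_of_mem _ (Set.mem_insert_of_mem _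
      (Set.mem_insert_of_mem _ rfl)))
  exact Submodule.add_mem _ (Submodule.smul_mem _ _ (Submodule.subset_span h1))
    (Submodule.add_mem _ (Submodule.smul_mem _ _ (Submodule.subset_span h2))
      (Submodule.add_mem _ (Submodule.smul_mem _ _ (Submodule.subset_span h3))
        (Submodule.add_mem _ (Submodule.smul_mem _ _ (Submodule.subset_span h4))
          (Submodule.smul_mem _ _ (Submodule.subset_span h5)))))

/-- the linear map X ↦ Ω∧X on span{α₁∧β₁, α₁∧β₂, α₂∧β₁, α₂∧β₂, γ∧η}
is injective iff (c - c₂ - c₃)(c² - c₁² + a² + cc₂ + cc₃ + c₂c₃) ≠ 0. -/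
theorem stmt11 (c c₁ c₂ c₃ a : ℝ) :
    Function.Injective
      (fun x : Submodule.span ℝ
          ({α₁ * β₁, α₁ * β₂, α₂ * β₁, α₂ * β₂, γ' * η'} :
            Set (ExteriorAlgebra ℝ (Fin 6 → ℝ))) =>
        Ω c c₁ c₂ c₃ a * (x : ExteriorAlgebra ℝ (Fin 6 → ℝ)))
      ↔ (c - c₂ - c₃) * (c ^ 2 - c₁ ^ 2 + a ^ 2 + c * c₂ + c * c₃ + c₂ * c₃) ≠ 0 := by
  constructor
  · intro hinj hD0
    have contra : ∀ y1 y2 y3 y4 y5 : ℝ,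
        (¬(y1 = 0 ∧ y2 = 0 ∧ y3 = 0 ∧ y4 = 0 ∧ y5 = 0)) →
        ((c+c₂)*y4 + (c+c₃)*y1 - (c₁+a)*y3 - (c₁-a)*y2 = 0) →
        ((c+c₂)*y5 + (c-c₂-c₃)*y1 = 0) →
        ((c₁+a)*y5 + (c-c₂-c₃)*y2 = 0) →
        ((c₁-a)*y5 + (c-c₂-c₃)*y3 = 0) →
        ((c+c₃)*y5 + (c-c₂-c₃)*y4 = 0) → False := by
      intro y1 y2 y3 y4 y5 hne hA hB1 hB2 hB3 hB4
      set w : EA := y1 • (e 0 * e 1) + (y2 • (e 0 * e 3) + (y3 • (e 2 * e 1) +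
        (y4 • (e 2 * e 3) + y5 • (e 4 * e 5)))) with hwdef
      have hmemw : w ∈ Submodule.span ℝ S := hmem y1 y2 y3 y4 y5
      have hΩ : Ω c c₁ c₂ c₃ a * w = 0 := by
        rw [hwdef, Ω_eq, key, hA, hB1, hB2, hB3, hB4]
        simp
      have hw0 : w ≠ 0 := by
        intro h0
        apply hne
        have g0 := congrArg (G ![0,1]) h0
        have g1 := congrArg (G ![0,3]) h0
        have g2 := congrArg (G ![2,1]) h0
        have g3 := congrArg (G ![2,3]) h0
        have g4 := congrArg (G ![4,5]) h0
        rw [hwdef] at g0 g1 g2 g3 g4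
        simp only [map_add, map_smul, map_zero, smul_eq_mul, mul_one, mul_zero,
          add_zero, zero_add,
          ge00, ge01, ge02, ge03, ge04, ge10, ge11, ge12, ge13, ge14,
          ge20, ge21, ge22, ge23, ge24, ge30, ge31, ge32, ge33, ge34,
          ge40, ge41, ge42, ge43, ge44] at g0 g1 g2 g3 g4
        exact ⟨g0, g1, g2, g3, g4⟩
      have heq : Ω c c₁ c₂ c₃ a * ((⟨w, hmemw⟩ : Submodule.span ℝ S) : EA)
          = Ω c c₁ c₂ c₃ a * ((0 : Submodule.span ℝ S) : EA) := by
        rw [ZeroMemClass.coe_zero, mul_zero]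
        exact hΩ
      have := hinj heq
      exact hw0 (by simpa using congrArg Subtype.val this)
    by_cases ht : c - c₂ - c₃ = 0
    · by_cases hs : c + c₃ = 0
      · exact contra 1 0 0 0 0 (by norm_num) (by linear_combination hs)
          (by linear_combination ht) (by ring) (by ring) (by ring)
      · exact contra (c₁-a) (c+c₃) 0 0 0 (fun h => hs h.2.1) (by ring)
          (by linear_combination (c₁-a)*ht) (by linear_combination (c+c₃)*ht)
          (by ring) (by ring)
    · have hE : c^2 - c₁^2 + a^2 + c*c₂ + c*c₃ + c₂*c₃ = 0 :=
        (mul_eq_zero.mp hD0).resolve_left ht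
      exact contra (-(c+c₂)) (-(c₁+a)) (-(c₁-a)) (-(c+c₃)) (c-c₂-c₃)
        (fun h => ht h.2.2.2.2) (by linear_combination (-2)*hE)
        (by ring) (by ring) (by ring) (by ring)
  · intro hD x y hxy
    have ht : c - c₂ - c₃ ≠ 0 := fun h => hD (by rw [h, zero_mul])
    have hE : c^2 - c₁^2 + a^2 + c*c₂ + c*c₃ + c₂*c₃ ≠ 0 := fun h => hD (by rw [h, mul_zero])
    have hxy' : Ω c c₁ c₂ c₃ a * (x : EA) = Ω c c₁ c₂ c₃ a * (y : EA) := hxy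
    have hwmem : ((x : EA) - (y : EA)) ∈ Submodule.span ℝ S := sub_mem x.2 y.2
    obtain ⟨x1, x2, x3, x4, x5, hrep⟩ := hset _ hwmem
    have hΩ0 : Ω c c₁ c₂ c₃ a * ((x : EA) - (y : EA)) = 0 := by
      rw [mul_sub, hxy', sub_self]
    rw [hrep, Ω_eq, key] at hΩ0
    have hA := congrArg (F ![0,1,2,3]) hΩ0
    have hB1 := congrArg (F ![0,1,4,5]) hΩ0
    have hB2 := congrArg (F ![0,3,4,5]) hΩ0
    have hB3 := congrArg (F ![2,1,4,5]) hΩ0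
    have hB4 := congrArg (F ![2,3,4,5]) hΩ0
    simp only [map_add, map_smul, map_zero, smul_eq_mul, mul_one, mul_zero,
      add_zero, zero_add,
      fe00, fe01, fe02, fe03, fe04, fe10, fe11, fe12, fe13, fe14,
      fe20, fe21, fe22, fe23, fe24, fe30, fe31, fe32, fe33, fe34,
      fe40, fe41, fe42, fe43, fe44] at hA hB1 hB2 hB3 hB4
    have h5 : x5 = 0 := by
      have h2 : (2*((c₁+a)*(c₁-a) - (c+c₂)*(c+c₃))) * x5 = 0 := by
        linear_combination (c-c₂-c₃)*hA - (c+c₃)*hB1 + (c₁-a)*hB2 + (c₁+a)*hB3 - (c+c₂)*hB4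
      have hne2 : (2*((c₁+a)*(c₁-a) - (c+c₂)*(c+c₃))) ≠ 0 := by
        intro h; apply hE; linear_combination (-1/2 : ℝ)*h
      exact (mul_eq_zero.mp h2).resolve_left hne2
    have h1 : x1 = 0 := by
      have h' : (c-c₂-c₃)*x1 = 0 := by linear_combination hB1 - (c+c₂)*h5
      exact (mul_eq_zero.mp h').resolve_left ht
    have h2 : x2 = 0 := by
      have h' : (c-c₂-c₃)*x2 = 0 := by linear_combination hB2 - (c₁+a)*h5
      exact (mul_eq_zero.mp h').resolve_left ht
    have h3 : x3 = 0 := by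
      have h' : (c-c₂-c₃)*x3 = 0 := by linear_combination hB3 - (c₁-a)*h5
      exact (mul_eq_zero.mp h').resolve_left ht
    have h4 : x4 = 0 := by
      have h' : (c-c₂-c₃)*x4 = 0 := by linear_combination hB4 - (c+c₃)*h5
      exact (mul_eq_zero.mp h').resolve_left ht
    have hz : (x : EA) - (y : EA) = 0 := by
      rw [hrep, h1, h2, h3, h4, h5]; simp
    exact Subtype.ext (sub_eq_zero.mp hz)
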